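/- Let Φ be a 3CNF formula and let (D(Φ),W(Φ)) be the NU default theory described in the context. For every S ⊆ W(Φ), there exists an extension E* of (D(Φ),W(Φ)_S) such that: for each xᵢ ∈ S, ¬xᵢ ∈ E* and yᵢ ∈ E*; and for each xᵢ ∈ W(Φ) \ S, xᵢ ∈ E* and ¬yᵢ ∈ E*. -/

import Mathlib

/-! Propositional formulas -/

inductive Form (V : Type) : Type
  | atom : V → Form V
  | tru  : Form V
  | fals : Form V
  | neg  : Form V → Form V
  | conj : Form V → Form V → Form V
  | disj : Form V → Form V → Form V

/-- Satisfaction of a formula by a valuation. -/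
def Form.sat {V : Type} (v : V → Prop) : Form V → Prop
  | .atom a => v a
  | .tru => True
  | .fals => False
  | .neg φ => ¬ Form.sat v φ
  | .conj φ ψ => Form.sat v φ ∧ Form.sat v ψ
  | .disj φ ψ => Form.sat v φ ∨ Form.sat v ψ

/-- Logical logClosure `T*` of a set of formulas. -/
def logClosure {V : Type} (T : Set (Form V)) : Set (Form V) :=
  { φ | ∀ v : V → Prop, (∀ ψ ∈ T, Form.sat v ψ) → Form.sat v φ }

/-- A default rule `α : β₁,…,β_m / γ` (`pre = none` means the prerequisite is missing). -/
structure Default (V : Type) : Type where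
  pre   : Option (Form V)
  justs : List (Form V)
  concl : Form V

/-- The stage sets `E_i` relative to a candidate extension `E`:
`E_0 = W`, `E_{i+1} = E_i* ∪ {γ | α:β₁,…,β_m/γ ∈ D, α ∈ E_i, ¬β₁ ∉ E, …, ¬β_m ∉ E}`. -/
def extStage {V : Type} (D : Set (Default V)) (W : Set (Form V)) (E : Set (Form V)) :
    ℕ → Set (Form V)
  | 0 => W
  | i + 1 =>
      logClosure (extStage D W E i) ∪
        { φ | ∃ d ∈ D, d.concl = φ ∧ (∀ a ∈ d.pre, a ∈ extStage D W E i) ∧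
              ∀ b ∈ d.justs, Form.neg b ∉ E }

/-- `E` is an extension of the default theory `(D, W)`. -/
def IsExtension {V : Type} (D : Set (Default V)) (W : Set (Form V)) (E : Set (Form V)) : Prop :=
  E = ⋃ i, extStage D W E i

/-- `(D, W) ⊨ φ`: every extension of `(D, W)` contains `φ`. -/
def entails {V : Type} (D : Set (Default V)) (W : Set (Form V)) (φ : Form V) : Prop :=
  ∀ E, IsExtension D W E → φ ∈ E

/-! Literals -/

/-- A literal: a letter together with a sign (`pos = true` means a positive literal). -/
structure Lit (V : Type) : Type where
  letter : V
  pos : Bool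

/-- The formula corresponding to a literal. -/
def Lit.toForm {V : Type} (l : Lit V) : Form V :=
  if l.pos then Form.atom l.letter else Form.neg (Form.atom l.letter)

/-- Negation of a literal (so that `¬¬a = a`). -/
def Lit.negate {V : Type} (l : Lit V) : Lit V := ⟨l.letter, !l.pos⟩

/-- A set of literals is consistent if it contains no complementary pair. -/
def LitConsistent {V : Type} (S : Set (Lit V)) : Prop := ∀ l ∈ S, l.negate ∉ S

/-! Normal mixed unary (NMU) default theories -/

/-- An NMU default `α : β / β` with `α` empty or a single literal and `β` a single literal. -/
structure NMUDefault (V : Type) : Type where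
  pre : Option (Lit V)
  concl : Lit V

/-- The general default rule corresponding to an NMU default. -/
def NMUDefault.toDefault {V : Type} (d : NMUDefault V) : Default V :=
  ⟨d.pre.map Lit.toForm, [d.concl.toForm], d.concl.toForm⟩

/-- `E` is an extension of the NMU theory `(D, W)`. -/
def NMU.IsExtension {V : Type} (D : Set (NMUDefault V)) (W : Set (Lit V))
    (E : Set (Form V)) : Prop :=
  _root_.IsExtension (NMUDefault.toDefault '' D) (Lit.toForm '' W) E

/-- The NMU theory `(D, W)` entails the literal `l`. -/
def NMU.entails {V : Type} (D : Set (NMUDefault V)) (W : Set (Lit V)) (l : Lit V) : Prop :=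
  _root_.entails (NMUDefault.toDefault '' D) (Lit.toForm '' W) l.toForm

/-- An NMU theory is normal unary (NU) if every nonempty prerequisite is positive. -/
def IsNU {V : Type} (D : Set (NMUDefault V)) : Prop :=
  ∀ d ∈ D, ∀ p ∈ d.pre, p.pos = true

/-! Atomic dependency graph -/

/-- Edge `(x, y)` of the atomic dependency graph: `x` occurs in the prerequisite and `y`
in the consequent of some default of `D`. -/
def depEdge {V : Type} (D : Set (NMUDefault V)) (x y : V) : Prop :=
  ∃ d ∈ D, (∃ p ∈ d.pre, p.letter = x) ∧ d.concl.letter = y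

/-- There is a path from `x` to `y` in the atomic dependency graph. -/
def depReach {V : Type} (D : Set (NMUDefault V)) : V → V → Prop :=
  Relation.ReflTransGen (depEdge D)

/-- A set of literals `S` influences a literal `l`. -/
def influences {V : Type} (D : Set (NMUDefault V)) (S : Set (Lit V)) (l : Lit V) : Prop :=
  ∃ t ∈ S, depReach D t.letter l.letter

/-- A 3CNF formula over variables `Fin n` with `m` conjuncts is represented by the
function giving the `k`-th literal of the `j`-th clause. -/
def Sat3 {n m : ℕ} (Φ : Fin m → Fin 3 → Lit (Fin n)) : Prop :=
  ∃ τ : Fin n → Bool, ∀ j : Fin m, ∃ k : Fin 3, τ (Φ j k).letter = (Φ j k).pos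

/-- The letters of the theory associated with a 3CNF `Φ`: the variables `xᵢ`,
the fresh letters `yᵢ` and the fresh letters `c_j`. -/
inductive PhiVar (n m : ℕ) : Type
  | X : Fin n → PhiVar n m
  | Y : Fin n → PhiVar n m
  | C : Fin m → PhiVar n m

/-- `σ(xᵢ) = xᵢ` and `σ(¬xᵢ) = yᵢ`. -/
def sigmaMap {n m : ℕ} (t : Lit (Fin n)) : Lit (PhiVar n m) :=
  if t.pos then ⟨PhiVar.X t.letter, true⟩ else ⟨PhiVar.Y t.letter, true⟩

/-- The defaults `D(Φ) = D₁ ∪ D₂ ∪ D₃`, where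
`D₁ = {xᵢ:¬yᵢ/¬yᵢ, :yᵢ/yᵢ}`, `D₂ = {σ(t_{j,k}):¬c_j/¬c_j}` and `D₃ = {:¬xᵢ/¬xᵢ}`. -/
def DPhi {n m : ℕ} (Φ : Fin m → Fin 3 → Lit (Fin n)) : Set (NMUDefault (PhiVar n m)) :=
  { d | (∃ i, d = ⟨some ⟨PhiVar.X i, true⟩, ⟨PhiVar.Y i, false⟩⟩) ∨
        (∃ i, d = ⟨none, ⟨PhiVar.Y i, true⟩⟩) ∨
        (∃ j k, d = ⟨some (sigmaMap (Φ j k)), ⟨PhiVar.C j, false⟩⟩) ∨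
        (∃ i, d = ⟨none, ⟨PhiVar.X i, false⟩⟩) }

/-- `W(Φ) = {x₁, …, xₙ}`. -/
def WPhi (n m : ℕ) : Set (Lit (PhiVar n m)) := { l | ∃ i, l = ⟨PhiVar.X i, true⟩ }

/-! Auxiliary development for `exists_extension_claim`. -/

section AuxExt

variable {V : Type}

lemma subset_logClosure (T : Set (Form V)) : T ⊆ logClosure T :=
  fun _ h _ hv => hv _ h

lemma logClosure_mono {T T' : Set (Form V)} (h : T ⊆ T') :
    logClosure T ⊆ logClosure T' :=
  fun _ hφ v hv => hφ v (fun ψ hψ => hv ψ (h hψ))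

lemma logClosure_idem (T : Set (Form V)) :
    logClosure (logClosure T) ⊆ logClosure T :=
  fun _ hφ v hv => hφ v (fun ψ hψ => hψ v hv)

lemma negneg_mem {T : Set (Form V)} {φ : Form V} (h : φ ∈ logClosure T) :
    Form.neg (Form.neg φ) ∈ logClosure T :=
  fun v hv hn => hn (h v hv)

lemma extStage_succ_mono (D : Set (Default V)) (W E : Set (Form V)) (i : ℕ) :
    extStage D W E i ⊆ extStage D W E (i + 1) :=
  fun φ h => Or.inl (subset_logClosure _ h)

variable {n m : ℕ}

/-- `xᵢ ∈ S`. -/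
def inS (S : Set (Lit (PhiVar n m))) (i : Fin n) : Prop :=
  (⟨PhiVar.X i, true⟩ : Lit (PhiVar n m)) ∈ S

/-- The literal `t` holds under the assignment `τ(i) = (xᵢ ∉ S)`. -/
def litHolds (S : Set (Lit (PhiVar n m))) (t : Lit (Fin n)) : Prop :=
  if t.pos then ¬ inS S t.letter else inS S t.letter

/-- The base of the candidate extension. -/
def baseB (Φ : Fin m → Fin 3 → Lit (Fin n)) (S : Set (Lit (PhiVar n m))) :
    Set (Form (PhiVar n m)) :=
  { φ | (∃ i, ¬ inS S i ∧ φ = Form.atom (PhiVar.X i)) ∨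
        (∃ i, inS S i ∧ φ = Form.neg (Form.atom (PhiVar.X i))) ∨
        (∃ i, inS S i ∧ φ = Form.atom (PhiVar.Y i)) ∨
        (∃ i, ¬ inS S i ∧ φ = Form.neg (Form.atom (PhiVar.Y i))) ∨
        (∃ j, (∃ k, litHolds S (Φ j k)) ∧ φ = Form.neg (Form.atom (PhiVar.C j))) }

/-- A canonical valuation satisfying the base. -/
def vS (S : Set (Lit (PhiVar n m))) : PhiVar n m → Prop
  | .X i => ¬ inS S i
  | .Y i => inS S i
  | .C _ => False

lemma vS_sat_base (Φ : Fin m → Fin 3 → Lit (Fin n)) (S : Set (Lit (PhiVar n m))) :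
    ∀ ψ ∈ baseB Φ S, Form.sat (vS S) ψ := by
  rintro ψ (⟨i, h, rfl⟩ | ⟨i, h, rfl⟩ | ⟨i, h, rfl⟩ | ⟨i, h, rfl⟩ | ⟨j, _, rfl⟩) <;>
    simp [Form.sat, vS] <;> tauto

lemma not_mem_E {Φ : Fin m → Fin 3 → Lit (Fin n)} {S : Set (Lit (PhiVar n m))}
    {φ : Form (PhiVar n m)} (h : ¬ Form.sat (vS S) φ) : φ ∉ logClosure (baseB Φ S) :=
  fun hφ => h (hφ _ (vS_sat_base Φ S))

lemma sat_of_mem_E {Φ : Fin m → Fin 3 → Lit (Fin n)} {S : Set (Lit (PhiVar n m))}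
    {φ : Form (PhiVar n m)} (h : φ ∈ logClosure (baseB Φ S)) : Form.sat (vS S) φ :=
  h _ (vS_sat_base Φ S)

end AuxExt

/-- For every `S ⊆ W(Φ)`, there exists an extension `E*` of `(D(Φ), W(Φ)_S)` such that:
for each `xᵢ ∈ S`, `¬xᵢ ∈ E*` and `yᵢ ∈ E*`; and for each `xᵢ ∉ S`, `xᵢ ∈ E*` and
`¬yᵢ ∈ E*`. -/
theorem exists_extension_claim {n m : ℕ} (Φ : Fin m → Fin 3 → Lit (Fin n))
    (S : Set (Lit (PhiVar n m))) (hS : S ⊆ WPhi n m) :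
    ∃ E : Set (Form (PhiVar n m)), NMU.IsExtension (DPhi Φ) (WPhi n m \ S) E ∧
      (∀ i : Fin n, (⟨PhiVar.X i, true⟩ : Lit (PhiVar n m)) ∈ S →
        Lit.toForm (⟨PhiVar.X i, false⟩ : Lit (PhiVar n m)) ∈ E ∧
        Lit.toForm (⟨PhiVar.Y i, true⟩ : Lit (PhiVar n m)) ∈ E) ∧
      (∀ i : Fin n, (⟨PhiVar.X i, true⟩ : Lit (PhiVar n m)) ∉ S →
        Lit.toForm (⟨PhiVar.X i, true⟩ : Lit (PhiVar n m)) ∈ E ∧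
        Lit.toForm (⟨PhiVar.Y i, false⟩ : Lit (PhiVar n m)) ∈ E) := by
  classical
  set D' := NMUDefault.toDefault '' DPhi Φ with hD'
  set W' := Lit.toForm '' (WPhi n m \ S) with hW'
  set E := logClosure (baseB Φ S) with hEdef
  have hBE : baseB Φ S ⊆ E := subset_logClosure _
  have tfp : ∀ a : PhiVar n m, Lit.toForm (⟨a, true⟩ : Lit (PhiVar n m)) = Form.atom a :=
    fun a => rfl
  have tfn : ∀ a : PhiVar n m,
      Lit.toForm (⟨a, false⟩ : Lit (PhiVar n m)) = Form.neg (Form.atom a) := fun a => rfl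
  -- every stage is contained in E
  have hstage : ∀ i, extStage D' W' E i ⊆ E := by
    intro i
    induction i with
    | zero =>
      rintro φ ⟨l, ⟨⟨i, rfl⟩, hl⟩, rfl⟩
      exact hBE (Or.inl ⟨i, hl, (tfp _)⟩)
    | succ i ih =>
      rintro φ (h | ⟨d, ⟨d', hd', rfl⟩, rfl, hpre, hjust⟩)
      · exact logClosure_idem _ (logClosure_mono ih h)
      · rcases hd' with ⟨i0, rfl⟩ | ⟨i0, rfl⟩ | ⟨j, k, rfl⟩ | ⟨i0, rfl⟩
        · -- D1a : xᵢ : ¬yᵢ / ¬yᵢ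
          have hj := hjust _ (List.Mem.head _)
          have hni : ¬ inS S i0 := by
            intro h
            exact hj (negneg_mem (hBE (Or.inr (Or.inr (Or.inl ⟨i0, h, rfl⟩)))))
          exact hBE (Or.inr (Or.inr (Or.inr (Or.inl ⟨i0, hni, tfn _⟩))))
        · -- D1b : : yᵢ / yᵢ
          have hj := hjust _ (List.Mem.head _)
          have hi : inS S i0 := by
            by_contra h
            exact hj (hBE (Or.inr (Or.inr (Or.inr (Or.inl ⟨i0, h, rfl⟩)))))
          exact hBE (Or.inr (Or.inr (Or.inl ⟨i0, hi, tfp _⟩)))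
        · -- D2 : σ(t) : ¬c_j / ¬c_j
          have hpm := sat_of_mem_E (ih (hpre _ rfl))
          have hlh : litHolds S (Φ j k) := by
            unfold litHolds
            cases hp : (Φ j k).pos with
            | true =>
              simp only [sigmaMap, hp, if_true, Lit.toForm, Form.sat, vS] at hpm
              simpa [hp] using hpm
            | false =>
              simp only [sigmaMap, hp, Bool.false_eq_true, if_false, Lit.toForm,
                Form.sat, vS] at hpm
              simpa [hp, Form.sat, vS] using hpm
          exact hBE (Or.inr (Or.inr (Or.inr (Or.inr ⟨j, ⟨k, hlh⟩, tfn _⟩))))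
        · -- D3 : : ¬xᵢ / ¬xᵢ
          have hj := hjust _ (List.Mem.head _)
          have hi : inS S i0 := by
            by_contra h
            exact hj (negneg_mem (hBE (Or.inl ⟨i0, h, rfl⟩)))
          exact hBE (Or.inr (Or.inl ⟨i0, hi, tfn _⟩))
  -- membership of base elements in early stages
  have hW0 : ∀ i : Fin n, ¬ inS S i → Form.atom (PhiVar.X i) ∈ extStage D' W' E 0 :=
    fun i h => ⟨⟨PhiVar.X i, true⟩, ⟨⟨i, rfl⟩, h⟩, tfp _⟩
  have hst1Y : ∀ i : Fin n, inS S i →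
      Form.atom (PhiVar.Y i) ∈ extStage D' W' E 1 := by
    intro i hi
    refine Or.inr ⟨NMUDefault.toDefault ⟨none, ⟨PhiVar.Y i, true⟩⟩,
      ⟨_, Or.inr (Or.inl ⟨i, rfl⟩), rfl⟩, tfp _, ?_, ?_⟩
    · intro a ha; exact absurd ha (by simp [NMUDefault.toDefault])
    · intro b hb
      rcases List.mem_singleton.mp hb with rfl
      exact not_mem_E (by simp [Lit.toForm, Form.sat, vS, hi])
  have hst1nY : ∀ i : Fin n, ¬ inS S i →
      Form.neg (Form.atom (PhiVar.Y i)) ∈ extStage D' W' E 1 := by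
    intro i hi
    refine Or.inr ⟨NMUDefault.toDefault ⟨some ⟨PhiVar.X i, true⟩, ⟨PhiVar.Y i, false⟩⟩,
      ⟨_, Or.inl ⟨i, rfl⟩, rfl⟩, tfn _, ?_, ?_⟩
    · intro a ha
      rcases Option.mem_def.mp ha with h
      injection h with h; subst h
      exact hW0 i hi
    · intro b hb
      rcases List.mem_singleton.mp hb with rfl
      exact not_mem_E (by simp [Lit.toForm, Form.sat, vS, hi])
  have hst1nX : ∀ i : Fin n, inS S i →
      Form.neg (Form.atom (PhiVar.X i)) ∈ extStage D' W' E 1 := by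
    intro i hi
    refine Or.inr ⟨NMUDefault.toDefault ⟨none, ⟨PhiVar.X i, false⟩⟩,
      ⟨_, Or.inr (Or.inr (Or.inr ⟨i, rfl⟩)), rfl⟩, tfn _, ?_, ?_⟩
    · intro a ha; exact absurd ha (by simp [NMUDefault.toDefault])
    · intro b hb
      rcases List.mem_singleton.mp hb with rfl
      exact not_mem_E (by simp [Lit.toForm, Form.sat, vS, hi])
  have hB2 : baseB Φ S ⊆ extStage D' W' E 2 := by
    rintro φ (⟨i, h, rfl⟩ | ⟨i, h, rfl⟩ | ⟨i, h, rfl⟩ | ⟨i, h, rfl⟩ | ⟨j, ⟨k, hk⟩, rfl⟩)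
    · exact extStage_succ_mono _ _ _ 1 (extStage_succ_mono _ _ _ 0 (hW0 i h))
    · exact extStage_succ_mono _ _ _ 1 (hst1nX i h)
    · exact extStage_succ_mono _ _ _ 1 (hst1Y i h)
    · exact extStage_succ_mono _ _ _ 1 (hst1nY i h)
    · refine Or.inr ⟨NMUDefault.toDefault ⟨some (sigmaMap (Φ j k)), ⟨PhiVar.C j, false⟩⟩,
        ⟨_, Or.inr (Or.inr (Or.inl ⟨j, k, rfl⟩)), rfl⟩, tfn _, ?_, ?_⟩
      · intro a ha
        rcases Option.mem_def.mp ha with h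
        injection h with h; subst h
        unfold litHolds at hk
        cases hp : (Φ j k).pos with
        | true =>
          rw [hp] at hk; simp only [if_true] at hk
          have : Lit.toForm (sigmaMap (Φ j k) : Lit (PhiVar n m)) =
              Form.atom (PhiVar.X (Φ j k).letter) := by
            simp [sigmaMap, hp, Lit.toForm]
          rw [this]
          exact extStage_succ_mono _ _ _ 0 (hW0 _ hk)
        | false =>
          rw [hp] at hk; simp only [Bool.false_eq_true, if_false] at hk
          have : Lit.toForm (sigmaMap (Φ j k) : Lit (PhiVar n m)) =
              Form.atom (PhiVar.Y (Φ j k).letter) := by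
            simp [sigmaMap, hp, Lit.toForm]
          rw [this]
          exact hst1Y _ hk
      · intro b hb
        rcases List.mem_singleton.mp hb with rfl
        exact not_mem_E (by simp [Lit.toForm, Form.sat, vS])
  have hEsub : E ⊆ ⋃ i, extStage D' W' E i := fun φ hφ =>
    Set.mem_iUnion.mpr ⟨3, Or.inl (logClosure_mono hB2 hφ)⟩
  refine ⟨E, Set.Subset.antisymm hEsub (Set.iUnion_subset hstage), ?_, ?_⟩
  · intro i hi
    exact ⟨hBE (Or.inr (Or.inl ⟨i, hi, tfn _⟩)), hBE (Or.inr (Or.inr (Or.inl ⟨i, hi, tfp _⟩)))⟩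
  · intro i hi
    exact ⟨hBE (Or.inl ⟨i, hi, tfp _⟩),
      hBE (Or.inr (Or.inr (Or.inr (Or.inl ⟨i, hi, tfn _⟩))))⟩
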